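/- Let K be a field of characteristic different from 2 and let a, b be nonzero elements of K. Then the quaternion algebra ℍ[K,a,b] is isomorphic as a K-algebra to the algebra of 2×2 matrices over K if and only if the quadratic form x² − a·y² − b·z² + a·b·w² in four variables has a nontrivial zero over K. -/

import Mathlib

open Quaternion

namespace QuatSplitAux

variable {K : Type*} [Field K]

/-- The norm form of the quaternion algebra. -/
def nrm (a b : K) (q : ℍ[K,a,b]) : K :=
  q.re ^ 2 - a * q.imI ^ 2 - b * q.imJ ^ 2 + a * b * q.imK ^ 2

lemma mul_star (a b : K) (q : ℍ[K,a,b]) :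
    q * star q = ((nrm a b q : K) : ℍ[K,a,b]) := by
  ext <;>
    simp [nrm, pow_two, QuaternionAlgebra.re_mul, QuaternionAlgebra.imI_mul,
      QuaternionAlgebra.imJ_mul, QuaternionAlgebra.imK_mul] <;> ring

lemma nrm_mul (a b : K) (q r : ℍ[K,a,b]) :
    nrm a b (q * r) = nrm a b q * nrm a b r := by
  apply QuaternionAlgebra.coe_injective (c₁ := a) (c₂ := 0) (c₃ := b)
  calc ((nrm a b (q * r) : K) : ℍ[K,a,b]) = (q * r) * star (q * r) := (mul_star a b _).symm
    _ = q * (r * star r) * star q := by rw [star_mul, mul_assoc, ← mul_assoc r, ← mul_assoc]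
    _ = q * ((nrm a b r : K) : ℍ[K,a,b]) * star q := by rw [mul_star]
    _ = q * star q * ((nrm a b r : K) : ℍ[K,a,b]) := by
          rw [mul_assoc, mul_assoc, (QuaternionAlgebra.coe_commute (nrm a b r) (star q)).eq]
    _ = ((nrm a b q * nrm a b r : K) : ℍ[K,a,b]) := by
          rw [mul_star, QuaternionAlgebra.coe_mul]

/-- If `b = p² - a q²`, the quaternion algebra splits. -/
lemma iso_of_rep (a b : K) (h2 : (2 : K) ≠ 0) (ha : a ≠ 0) (hb : b ≠ 0)
    (p q : K) (hpq : p ^ 2 - a * q ^ 2 = b) :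
    Nonempty (ℍ[K,a,b] ≃ₐ[K] Matrix (Fin 2) (Fin 2) K) := by
  set I : Matrix (Fin 2) (Fin 2) K := !![0, a; 1, 0] with hI
  set J : Matrix (Fin 2) (Fin 2) K := !![p, -(a*q); q, -p] with hJ
  set Km : Matrix (Fin 2) (Fin 2) K := !![a*q, -(a*p); p, -(a*q)] with hK
  have hmatI : I * I = a • (1 : Matrix (Fin 2) (Fin 2) K) := by
    ext i j; fin_cases i <;> fin_cases j <;>
      simp [hI, Matrix.mul_apply, Fin.sum_univ_two, Matrix.one_apply]
  have hmatJ : J * J = b • (1 : Matrix (Fin 2) (Fin 2) K) := by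
    ext i j; fin_cases i <;> fin_cases j <;>
      simp [hJ, Matrix.mul_apply, Fin.sum_univ_two, Matrix.one_apply] <;>
      first
        | ring1
        | linear_combination hpq
        | linear_combination -hpq
        | linear_combination 2 * hpq
        | linear_combination -2 * hpq
  have hmatIJ : I * J = Km := by
    ext i j; fin_cases i <;> fin_cases j <;>
      simp [hI, hJ, hK, Matrix.mul_apply, Fin.sum_univ_two] <;> ring
  have hmatJI : J * I = -Km := by
    ext i j; fin_cases i <;> fin_cases j <;>
      simp [hI, hJ, hK, Matrix.mul_apply, Fin.sum_univ_two] <;> ring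
  let B : QuaternionAlgebra.Basis (Matrix (Fin 2) (Fin 2) K) a 0 b :=
    { i := I, j := J, k := Km
      i_mul_i := by rw [hmatI]; simp
      j_mul_j := hmatJ
      i_mul_j := hmatIJ
      j_mul_i := by rw [hmatJI]; simp }
  let φ : ℍ[K,a,b] →ₐ[K] Matrix (Fin 2) (Fin 2) K := B.liftHom
  have hinj : Function.Injective φ := by
    rw [injective_iff_map_eq_zero]
    intro x hx
    have hx' : algebraMap K (Matrix (Fin 2) (Fin 2) K) x.re
        + x.imI • I + x.imJ • J + x.imK • Km = 0 := hx
    have e00 := congrFun (congrFun hx' 0) 0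
    have e01 := congrFun (congrFun hx' 0) 1
    have e10 := congrFun (congrFun hx' 1) 0
    have e11 := congrFun (congrFun hx' 1) 1
    simp [hI, hJ, hK, Matrix.algebraMap_matrix_apply] at e00 e01 e10 e11
    have hre : x.re = 0 := by
      have h : (2 : K) * x.re = 0 := by linear_combination e00 + e11
      exact (mul_eq_zero.mp h).resolve_left h2
    have himI : x.imI = 0 := by
      have h : ((2 : K) * a) * x.imI = 0 := by linear_combination e01 + a * e10
      exact (mul_eq_zero.mp h).resolve_left (mul_ne_zero h2 ha)
    have s1 : p * x.imJ + a * q * x.imK = 0 := by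
      have h : (2 : K) * (p * x.imJ + a * q * x.imK) = 0 := by linear_combination e00 - e11
      exact (mul_eq_zero.mp h).resolve_left h2
    have s2 : q * x.imJ + p * x.imK = 0 := by linear_combination e10 - himI
    have himJ : x.imJ = 0 := by
      have h : b * x.imJ = 0 := by
        linear_combination p * s1 - a * q * s2 - x.imJ * hpq
      exact (mul_eq_zero.mp h).resolve_left hb
    have himK : x.imK = 0 := by
      have h : b * x.imK = 0 := by
        linear_combination p * s2 - q * s1 - x.imK * hpq
      exact (mul_eq_zero.mp h).resolve_left hb
    ext <;> simp [hre, himI, himJ, himK]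
  have hdim : Module.finrank K ℍ[K,a,b] = Module.finrank K (Matrix (Fin 2) (Fin 2) K) := by
    rw [QuaternionAlgebra.finrank_eq_four, Module.finrank_matrix]
    simp
  have hsurj : Function.Surjective φ :=
    (LinearMap.injective_iff_surjective_of_finrank_eq_finrank (f := φ.toLinearMap) hdim).mp hinj
  exact ⟨AlgEquiv.ofBijective φ ⟨hinj, hsurj⟩⟩

end QuatSplitAux

/-- For a field `K` of characteristic ≠ 2 and nonzero `a b : K`, the quaternion
algebra `ℍ[K,a,b]` is isomorphic to the 2×2 matrix algebra over `K` iff its norm form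
`x² − a y² − b z² + a b w²` has a nontrivial zero over `K`. -/
theorem quaternionAlgebra_iso_matrix_iff_norm_form_has_nontrivial_zero
    (K : Type*) [Field K] (hchar : ringChar K ≠ 2) (a b : K) (ha : a ≠ 0) (hb : b ≠ 0) :
    Nonempty (ℍ[K, a, b] ≃ₐ[K] Matrix (Fin 2) (Fin 2) K) ↔
      ∃ x y z w : K, ¬ (x = 0 ∧ y = 0 ∧ z = 0 ∧ w = 0) ∧
        x ^ 2 - a * y ^ 2 - b * z ^ 2 + a * b * w ^ 2 = 0 := by
  have h2 : (2 : K) ≠ 0 := Ring.two_ne_zero hchar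
  constructor
  · rintro ⟨e⟩
    set E : Matrix (Fin 2) (Fin 2) K := !![0, 1; 0, 0] with hE
    have hEE : E * E = 0 := by
      ext i j; fin_cases i <;> fin_cases j <;>
        simp [hE, Matrix.mul_apply, Fin.sum_univ_two]
    have hEne : E ≠ 0 := by
      intro h
      have := congrFun (congrFun h 0) 1
      simp [hE] at this
    set u : ℍ[K,a,b] := e.symm E with hu
    have hune : u ≠ 0 := by
      intro h
      apply hEne
      have : e u = e 0 := by rw [h]
      simpa [hu] using this
    have huu : u * u = 0 := by
      rw [hu, ← map_mul, hEE, map_zero]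
    have hn : QuatSplitAux.nrm a b u = 0 := by
      have h := QuatSplitAux.nrm_mul a b u u
      rw [huu] at h
      have h0 : QuatSplitAux.nrm a b (0 : ℍ[K,a,b]) = 0 := by
        simp [QuatSplitAux.nrm]
      rw [h0] at h
      exact (mul_self_eq_zero.mp h.symm)
    refine ⟨u.re, u.imI, u.imJ, u.imK, ?_, hn⟩
    rintro ⟨h1, h2, h3, h4⟩
    exact hune (by ext <;> simp [h1, h2, h3, h4])
  · rintro ⟨x, y, z, w, hnt, heq⟩
    by_cases hsq : ∃ c : K, c ^ 2 = a
    · obtain ⟨c, hc⟩ := hsq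
      have hc0 : c ≠ 0 := by
        intro h; apply ha; rw [← hc, h]; ring
      refine QuatSplitAux.iso_of_rep a b h2 ha hb ((b + 1) / 2) ((b - 1) / (2 * c)) ?_
      field_simp
      linear_combination (b - 1) ^ 2 * hc
    · push_neg at hsq
      have hs : z ^ 2 - a * w ^ 2 ≠ 0 := by
        intro h0
        have hw : w = 0 := by
          by_contra hw
          exact hsq (z / w) (by field_simp; linear_combination h0)
        have hz : z = 0 := by
          rw [hw] at h0; simpa [pow_eq_zero_iff] using h0
        have hy : y = 0 := by
          by_contra hy
          refine hsq (x / y) ?_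
          have : x ^ 2 = a * y ^ 2 := by
            rw [hw, hz] at heq; linear_combination heq
          field_simp
          linear_combination this
        have hx : x = 0 := by
          rw [hw, hz, hy] at heq
          have : x ^ 2 = 0 := by linear_combination heq
          simpa [pow_eq_zero_iff] using this
        exact hnt ⟨hx, hy, hz, hw⟩
      refine QuatSplitAux.iso_of_rep a b h2 ha hb
        ((x * z - a * y * w) / (z ^ 2 - a * w ^ 2))
        ((y * z - x * w) / (z ^ 2 - a * w ^ 2)) ?_
      field_simp
      linear_combination (z ^ 2 - a * w ^ 2) * heq
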